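/- Let d1, d2 ∈ SFL be such that ρ_PSD(d1) = ρ_PSD(d2). Then for every V ⊆ VI, ρ_PSD(aproj_S(d1, V)) = ρ_PSD(aproj_S(d2, V)); i.e., ρ_PSD is a congruence with respect to the abstract existential quantification operator aproj_S. -/
import Mathlib


open Classical

noncomputable section

/-- The set `SG` of sharing groups over `VI`: nonempty subsets of `VI`. -/
def SG {Vr : Type} (VI : Set Vr) : Set (Set Vr) := {S | S ⊆ VI ∧ S ≠ ∅}

/-- An element of the abstract domain `SFL`: a set-sharing component together
with a freeness and a linearity component. -/
structure SFLElem (Vr : Type) where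
  sh : Set (Set Vr)
  f : Set Vr
  l : Set Vr

/-- Well-formedness of an `SFL` element: `sh ∈ SH = ℘(SG VI)`, `f ⊆ VI`, `l ⊆ VI`. -/
def SFLElem.WF {Vr : Type} (VI : Set Vr) (d : SFLElem Vr) : Prop :=
  d.sh ⊆ SG VI ∧ d.f ⊆ VI ∧ d.l ⊆ VI

/-- The bottom element `⊥_S = ⟨∅, VI, VI⟩` of `SFL`. -/
def botS {Vr : Type} (VI : Set Vr) : SFLElem Vr := ⟨∅, VI, VI⟩

/-- The order of `SFL`: `⊆` on the sharing component, `⊇` on freeness and linearity. -/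
def SFLElem.leS {Vr : Type} (d1 d2 : SFLElem Vr) : Prop :=
  d1.sh ⊆ d2.sh ∧ d2.f ⊆ d1.f ∧ d2.l ⊆ d1.l

/-- The least upper bound of `SFL`. -/
def SFLElem.lubS {Vr : Type} (d1 d2 : SFLElem Vr) : SFLElem Vr :=
  ⟨d1.sh ∪ d2.sh, d1.f ∩ d2.f, d1.l ∩ d2.l⟩

section SHOps

variable {Vr : Type}

/-- The relevant component of `sh` with respect to `V`. -/
def relSH (V : Set Vr) (sh : Set (Set Vr)) : Set (Set Vr) :=
  {S | S ∈ sh ∧ S ∩ V ≠ ∅}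

/-- The irrelevant component of `sh` with respect to `V`. -/
def nrelSH (V : Set Vr) (sh : Set (Set Vr)) : Set (Set Vr) := sh \ relSH V sh

/-- The binary union function on sharing sets. -/
def binSH (sh1 sh2 : Set (Set Vr)) : Set (Set Vr) :=
  {S | ∃ S1 ∈ sh1, ∃ S2 ∈ sh2, S = S1 ∪ S2}

/-- The star-union of a sharing set: all sharing groups that are unions of
finitely many (at least one) elements of `sh`. -/
def starSH (VI : Set Vr) (sh : Set (Set Vr)) : Set (Set Vr) :=
  {S | S ∈ SG VI ∧ ∃ F : Set (Set Vr), F.Finite ∧ F.Nonempty ∧ F ⊆ sh ∧ S = ⋃₀ F}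

/-- The redundancy-removing upper closure operator `ρ_PSD` on sharing sets. -/
def rhoPSDsh (VI : Set Vr) (sh : Set (Set Vr)) : Set (Set Vr) :=
  {S | S ∈ SG VI ∧ ∀ y ∈ S, S = ⋃₀ {U | U ∈ sh ∧ y ∈ U ∧ U ⊆ S}}

/-- `ρ_PSD` on `SFL`: it acts on the sharing component only. -/
def rhoPSD (VI : Set Vr) (d : SFLElem Vr) : SFLElem Vr :=
  ⟨rhoPSDsh VI d.sh, d.f, d.l⟩

end SHOps

/-- The abstract existential quantification on sharing sets. -/
def aexistsSH {Vr : Type} (sh : Set (Set Vr)) (V : Set Vr) : Set (Set Vr) :=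
  {S | ∃ U ∈ sh, S = U \ V ∧ S ≠ ∅} ∪ {S | ∃ x ∈ V, S = ({x} : Set Vr)}

/-- The abstract existential quantification operator `aproj_S` on `SFL`. -/
def aprojS {Vr : Type} (d : SFLElem Vr) (V : Set Vr) : SFLElem Vr :=
  ⟨aexistsSH d.sh V, d.f ∪ V, d.l ∪ V⟩

section Aux

variable {Vr : Type} {VI : Set Vr}

lemma rho_sub_SG (sh : Set (Set Vr)) : rhoPSDsh VI sh ⊆ SG VI := fun _ hS => hS.1

lemma rho_extensive {sh : Set (Set Vr)} (h : sh ⊆ SG VI) : sh ⊆ rhoPSDsh VI sh := by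
  intro S hS
  refine ⟨h hS, fun y hy => ?_⟩
  apply Set.eq_of_subset_of_subset
  · intro x hx; exact ⟨S, ⟨hS, hy, subset_rfl⟩, hx⟩
  · rintro x ⟨U, ⟨_, _, hUS⟩, hxU⟩; exact hUS hxU

lemma rho_mono {sh sh' : Set (Set Vr)} (h : sh ⊆ sh') :
    rhoPSDsh VI sh ⊆ rhoPSDsh VI sh' := by
  rintro S ⟨hSG, hAll⟩
  refine ⟨hSG, fun y hy => ?_⟩
  apply Set.eq_of_subset_of_subset
  · intro x hx
    have := (hAll y hy) ▸ hx
    rcases this with ⟨U, ⟨hU, hyU, hUS⟩, hxU⟩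
    exact ⟨U, ⟨h hU, hyU, hUS⟩, hxU⟩
  · rintro x ⟨U, ⟨_, _, hUS⟩, hxU⟩; exact hUS hxU

lemma rho_idem (sh : Set (Set Vr)) :
    rhoPSDsh VI (rhoPSDsh VI sh) ⊆ rhoPSDsh VI sh := by
  rintro S ⟨hSG, hAll⟩
  refine ⟨hSG, fun y hy => ?_⟩
  apply Set.eq_of_subset_of_subset
  · intro x hx
    have hx' := (hAll y hy) ▸ hx
    rcases hx' with ⟨U, ⟨⟨_, hUAll⟩, hyU, hUS⟩, hxU⟩
    have := (hUAll y hyU) ▸ hxU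
    rcases this with ⟨W, ⟨hW, hyW, hWU⟩, hxW⟩
    exact ⟨W, ⟨hW, hyW, hWU.trans hUS⟩, hxW⟩
  · rintro x ⟨U, ⟨_, _, hUS⟩, hxU⟩; exact hUS hxU

lemma aexists_sub_SG {sh : Set (Set Vr)} (h : sh ⊆ SG VI) (hV : V ⊆ VI) :
    aexistsSH sh V ⊆ SG VI := by
  rintro S (⟨U, hU, rfl, hne⟩ | ⟨x, hx, rfl⟩)
  · exact ⟨(Set.diff_subset).trans (h hU).1, hne⟩
  · exact ⟨Set.singleton_subset_iff.mpr (hV hx), Set.singleton_ne_empty x⟩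

lemma aexists_mono {sh sh' : Set (Set Vr)} (h : sh ⊆ sh') (V : Set Vr) :
    aexistsSH sh V ⊆ aexistsSH sh' V := by
  rintro S (⟨U, hU, rfl, hne⟩ | hs)
  · exact Or.inl ⟨U, h hU, rfl, hne⟩
  · exact Or.inr hs

lemma aexists_rho_sub {sh : Set (Set Vr)} (h : sh ⊆ SG VI) (hV : V ⊆ VI) :
    aexistsSH (rhoPSDsh VI sh) V ⊆ rhoPSDsh VI (aexistsSH sh V) := by
  rintro S (⟨U, ⟨hUSG, hUAll⟩, rfl, hne⟩ | hs)
  · refine ⟨⟨(Set.diff_subset).trans hUSG.1, hne⟩, fun y hy => ?_⟩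
    apply Set.eq_of_subset_of_subset
    · intro x hx
      have hxU := (hUAll y hy.1) ▸ hx.1
      rcases hxU with ⟨W, ⟨hW, hyW, hWU⟩, hxW⟩
      refine ⟨W \ V, ⟨Or.inl ⟨W, hW, rfl, ?_⟩, ⟨hyW, hy.2⟩,
        Set.diff_subset_diff_left hWU⟩, hxW, hx.2⟩
      exact fun hWV => (Set.eq_empty_iff_forall_notMem.mp hWV y) ⟨hyW, hy.2⟩
    · rintro x ⟨W, ⟨_, _, hWS⟩, hxW⟩; exact hWS hxW
  · exact rho_extensive (aexists_sub_SG h hV) (Or.inr hs)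

lemma rho_aexists_eq {sh : Set (Set Vr)} (h : sh ⊆ SG VI) (hV : V ⊆ VI) :
    rhoPSDsh VI (aexistsSH sh V) = rhoPSDsh VI (aexistsSH (rhoPSDsh VI sh) V) := by
  apply Set.eq_of_subset_of_subset
  · exact rho_mono (aexists_mono (rho_extensive h) V)
  · exact (rho_mono (aexists_rho_sub h hV)).trans (rho_idem _)

end Aux

/-- `ρ_PSD` is a congruence with respect to the abstract
existential quantification operator `aproj_S`. -/
theorem rhoPSD_congruence_aproj
    {Vr : Type} (VI : Set Vr) (_hVI : VI.Finite)
    (d1 d2 : SFLElem Vr) (_h1 : d1.WF VI) (_h2 : d2.WF VI)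
    (_hpsd : rhoPSD VI d1 = rhoPSD VI d2)
    (V : Set Vr) (_hV : V ⊆ VI) :
    rhoPSD VI (aprojS d1 V) = rhoPSD VI (aprojS d2 V) := by
  have hsh : rhoPSDsh VI d1.sh = rhoPSDsh VI d2.sh := congrArg SFLElem.sh _hpsd
  have hf := congrArg SFLElem.f _hpsd
  have hl := congrArg SFLElem.l _hpsd
  simp only [rhoPSD, aprojS]
  rw [show d1.f = d2.f from hf, show d1.l = d2.l from hl]
  congr 1
  calc rhoPSDsh VI (aexistsSH d1.sh V)
      = rhoPSDsh VI (aexistsSH (rhoPSDsh VI d1.sh) V) := rho_aexists_eq _h1.1 _hV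
    _ = rhoPSDsh VI (aexistsSH (rhoPSDsh VI d2.sh) V) := by rw [hsh]
    _ = rhoPSDsh VI (aexistsSH d2.sh V) := (rho_aexists_eq _h2.1 _hV).symm
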